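/- Let f' : ℝᵏ → ℝᵏ be affine, f'(x') = A'x' + D, and consider the system ẋ' = f'(x'), ẋ'' = A''x'' + g(x') on ℝᵏ × ℝˡ with g a polynomial map. Then there exist m ≥ 0, a polynomial map p : ℝᵏ → ℝᵐ, a matrix A ∈ ℝ^{(k+l+m)×(k+l+m)}, and a vector D̂ ∈ ℝ^{k+l+m}, such that for every solution (x'(t), x''(t)) of the system, the curve z(t) := (x'(t), x''(t), p(x'(t))) satisfies ż = Az + D̂. -/

import Mathlib

open MvPolynomial

noncomputable section Aux
variable {k : ℕ} (A' : Matrix (Fin k) (Fin k) ℝ) (D : Fin k → ℝ)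

/-- The polynomial vector field of the affine system. -/
def fpoly (i : Fin k) : MvPolynomial (Fin k) ℝ :=
  (∑ j, C (A' i j) * X j) + C (D i)

lemma eval_fpoly (x : Fin k → ℝ) (i : Fin k) :
    eval x (fpoly A' D i) = A'.mulVec x i + D i := by
  simp [fpoly, Matrix.mulVec, dotProduct]

lemma fpoly_totalDegree (i : Fin k) : (fpoly A' D i).totalDegree ≤ 1 := by
  refine (totalDegree_add _ _).trans (max_le ?_ (by simp))
  refine (totalDegree_finset_sum _ _).trans (Finset.sup_le fun j _ => ?_)
  refine (totalDegree_mul _ _).trans ?_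
  simp [totalDegree_X]

/-- The Lie derivative along the affine vector field. -/
def lie (q : MvPolynomial (Fin k) ℝ) : MvPolynomial (Fin k) ℝ :=
  ∑ i, fpoly A' D i * pderiv i q

lemma lie_C (a : ℝ) : lie A' D (C a) = 0 := by simp [lie]

lemma lieD_add (p q : MvPolynomial (Fin k) ℝ) :
    lie A' D (p + q) = lie A' D p + lie A' D q := by
  simp [lie, mul_add, Finset.sum_add_distrib]

lemma lie_mul_X (p : MvPolynomial (Fin k) ℝ) (n : Fin k) :
    lie A' D (p * X n) = lie A' D p * X n + fpoly A' D n * p := by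
  have h : ∀ i : Fin k, fpoly A' D i * pderiv i (p * X n)
      = fpoly A' D i * pderiv i p * X n + if i = n then fpoly A' D n * p else 0 := by
    intro i
    rw [pderiv_mul, pderiv_X]
    by_cases h : i = n <;>
      simp [h, Pi.single_apply, mul_add, mul_comm, mul_assoc, mul_left_comm]
  simp only [lie, h, Finset.sum_add_distrib, Finset.sum_ite_eq' Finset.univ n,
    Finset.mem_univ, if_true, Finset.sum_mul]

lemma lie_totalDegree (q : MvPolynomial (Fin k) ℝ) :
    (lie A' D q).totalDegree ≤ q.totalDegree := by
  refine (totalDegree_finset_sum _ _).trans (Finset.sup_le fun i _ => ?_)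
  conv_lhs => rw [q.as_sum]
  rw [map_sum, Finset.mul_sum]
  refine (totalDegree_finset_sum _ _).trans (Finset.sup_le fun s hs => ?_)
  rw [pderiv_monomial]
  by_cases hsi : s i = 0
  · simp [hsi]
  · refine (totalDegree_mul _ _).trans ?_
    have h1 : Finsupp.single i 1 ≤ s := by
      rwa [Finsupp.single_le_iff, Nat.one_le_iff_ne_zero]
    have h2 : (s - Finsupp.single i 1) + Finsupp.single i 1 = s :=
      tsub_add_cancel_of_le h1
    have h3 : (s - Finsupp.single i 1).sum (fun _ e => e) + 1 = s.sum (fun _ e => e) := by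
      conv_rhs => rw [← h2]
      rw [Finsupp.sum_add_index' (fun _ => rfl) (fun _ _ _ => rfl)]
      simp
    calc (fpoly A' D i).totalDegree + (monomial (s - Finsupp.single i 1)
            (coeff s q * (s i : ℝ))).totalDegree
        ≤ 1 + (s - Finsupp.single i 1).sum (fun _ e => e) :=
          add_le_add (fpoly_totalDegree A' D i) (totalDegree_monomial_le _ _)
      _ = s.sum (fun _ e => e) := by omega
      _ ≤ q.totalDegree := le_totalDegree hs

lemma chain_rule (x' : ℝ → Fin k → ℝ)
    (hx : ∀ t, HasDerivAt x' (A'.mulVec (x' t) + D) t)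
    (q : MvPolynomial (Fin k) ℝ) (t : ℝ) :
    HasDerivAt (fun s => eval (x' s) q) (eval (x' t) (lie A' D q)) t := by
  induction q using MvPolynomial.induction_on with
  | C a => simpa [lie_C] using hasDerivAt_const t a
  | add p q hp hq => simp only [lieD_add, map_add]; exact hp.add hq
  | mul_X p n hp =>
    have hxn : HasDerivAt (fun s => x' s n) ((A'.mulVec (x' t) + D) n) t :=
      hasDerivAt_pi.1 (hx t) n
    have h := hp.mul hxn
    have he : (fun s => eval (x' s) (p * X n)) = fun s => eval (x' s) p * x' s n := by
      funext s; simp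
    rw [he]
    refine HasDerivAt.congr_deriv h ?_
    rw [lie_mul_X]
    simp [eval_fpoly]
    ring

end Aux

set_option maxHeartbeats 1000000 in
theorem stmt_6 {k l : ℕ}
    (A' : Matrix (Fin k) (Fin k) ℝ) (D : Fin k → ℝ)
    (A'' : Matrix (Fin l) (Fin l) ℝ)
    (g : (Fin k → ℝ) → (Fin l → ℝ))
    (hg : ∃ G : Fin l → MvPolynomial (Fin k) ℝ, ∀ x i, g x i = eval x (G i)) :
    ∃ (m : ℕ) (p : (Fin k → ℝ) → (Fin m → ℝ))
      (_ : ∃ P : Fin m → MvPolynomial (Fin k) ℝ, ∀ x i, p x i = eval x (P i))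
      (A : Matrix (Fin k ⊕ Fin l ⊕ Fin m) (Fin k ⊕ Fin l ⊕ Fin m) ℝ)
      (Dhat : Fin k ⊕ Fin l ⊕ Fin m → ℝ),
      ∀ (x' : ℝ → Fin k → ℝ) (x'' : ℝ → Fin l → ℝ),
        (∀ t, HasDerivAt x' (A'.mulVec (x' t) + D) t) →
        (∀ t, HasDerivAt x'' (A''.mulVec (x'' t) + g (x' t)) t) →
        ∀ t, HasDerivAt
          (fun s => (Sum.elim (x' s) (Sum.elim (x'' s) (p (x' s))) :
            Fin k ⊕ Fin l ⊕ Fin m → ℝ))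
          (A.mulVec (Sum.elim (x' t) (Sum.elim (x'' t) (p (x' t)))) + Dhat) t := by
  classical
  obtain ⟨G, hG⟩ := hg
  set N : ℕ := Finset.univ.sup fun i => (G i).totalDegree with hN
  set W : Submodule ℝ (MvPolynomial (Fin k) ℝ) := restrictTotalDegree (Fin k) ℝ N with hW
  have hGW : ∀ i, G i ∈ W := by
    intro i
    rw [hW, mem_restrictTotalDegree, hN]
    exact Finset.le_sup (f := fun i => (G i).totalDegree) (Finset.mem_univ i)
  have hlieW : ∀ q ∈ W, lie A' D q ∈ W := by
    intro q hq
    rw [hW, mem_restrictTotalDegree]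
    rw [hW, mem_restrictTotalDegree] at hq
    exact (lie_totalDegree A' D q).trans hq
  haveI hfin : Module.Finite ℝ W := by rw [hW]; infer_instance
  haveI hfree : Module.Free ℝ W := Module.Free.of_divisionRing ℝ ↥W
  set m : ℕ := Module.finrank ℝ W with hm
  set b : Module.Basis (Fin m) ℝ W := Module.finBasis ℝ W with hb
  set P : Fin m → MvPolynomial (Fin k) ℝ := fun j => (b j : MvPolynomial (Fin k) ℝ) with hP
  set p : (Fin k → ℝ) → (Fin m → ℝ) := fun x j => eval x (P j) with hp
  -- representation lemma
  have hrep : ∀ (w : W) (x : Fin k → ℝ),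
      eval x (w : MvPolynomial (Fin k) ℝ) = ∑ j, b.repr w j * p x j := by
    intro w x
    conv_lhs => rw [← b.sum_repr w]
    push_cast
    rw [map_sum]
    simp [hp, hP, smul_eval]
  -- coefficient matrices
  set γ : Matrix (Fin l) (Fin m) ℝ := fun i j => b.repr ⟨G i, hGW i⟩ j with hγ
  set β : Matrix (Fin m) (Fin m) ℝ :=
    fun j j' => b.repr ⟨lie A' D (P j), hlieW _ (b j).2⟩ j' with hβ
  refine ⟨m, p, ⟨P, fun x i => rfl⟩,
    Matrix.fromBlocks A' 0 0 (Matrix.fromBlocks A'' γ 0 β),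
    Sum.elim D 0, ?_⟩
  intro x' x'' h1 h2 t
  rw [hasDerivAt_pi]
  intro idx
  rw [Matrix.fromBlocks_mulVec, Matrix.fromBlocks_mulVec]
  match idx with
  | Sum.inl i =>
      have hd := hasDerivAt_pi.1 (h1 t) i
      refine HasDerivAt.congr_deriv hd ?_
      simp [Matrix.zero_mulVec]
  | Sum.inr (Sum.inl i) =>
      have hd := hasDerivAt_pi.1 (h2 t) i
      refine HasDerivAt.congr_deriv hd ?_
      have : g (x' t) i = Matrix.mulVec γ (p (x' t)) i := by
        rw [hG, hrep ⟨G i, hGW i⟩]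
        simp [Matrix.mulVec, dotProduct, hγ]
      simp [Matrix.zero_mulVec, this, Matrix.mulVec, dotProduct]
  | Sum.inr (Sum.inr j) =>
      have hd := chain_rule A' D x' h1 (P j) t
      have he : (fun s => Sum.elim (x' s) (Sum.elim (x'' s) (p (x' s)))
          (Sum.inr (Sum.inr j))) = fun s => eval (x' s) (P j) := rfl
      rw [he]
      refine HasDerivAt.congr_deriv hd ?_
      rw [hrep ⟨lie A' D (P j), hlieW _ (b j).2⟩]
      simp [Matrix.zero_mulVec, Matrix.mulVec, dotProduct, hβ]
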